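/- The even-length subgroup E of the group Γ = ℤ₂^{*n} / ⟨⟨(aᵢaⱼ)^s = e for all i,j, and aᵢaⱼa_k = a_k aⱼ aᵢ for all i,j,k⟩⟩ is abelian and is generated by the elements bᵢ = aₙaᵢ for i = 1,…,n−1, each of order dividing s; in fact E is isomorphic to ℤ_s^{⊕(n−1)} via bᵢ ↦ (i-th standard generator). -/

import Mathlib

/-- Relations: `aᵢ² = 1`, `(aᵢaⱼ)^s = 1` and `aᵢaⱼaₖ = aₖaⱼaᵢ`. -/
def rels3 (m s : ℕ) : Set (FreeGroup (Fin (m + 1))) :=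
  (Set.range fun i => FreeGroup.of i * FreeGroup.of i) ∪
  (Set.range fun p : Fin (m + 1) × Fin (m + 1) =>
    (FreeGroup.of p.1 * FreeGroup.of p.2) ^ s) ∪
  (Set.range fun t : Fin (m + 1) × Fin (m + 1) × Fin (m + 1) =>
    FreeGroup.of t.1 * FreeGroup.of t.2.1 * FreeGroup.of t.2.2 *
      (FreeGroup.of t.2.2 * FreeGroup.of t.2.1 * FreeGroup.of t.1)⁻¹)

/-- The group `Γ = ℤ₂^{*(m+1)} / ⟨⟨(aᵢaⱼ)^s, aᵢaⱼaₖ(aₖaⱼaᵢ)⁻¹⟩⟩`. -/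
abbrev Gamma3 (m s : ℕ) := PresentedGroup (rels3 m s)

/-- The generators `a₁, …, aₙ` of `Γ` (with `n = m + 1`). -/
def a3 {m s : ℕ} (i : Fin (m + 1)) : Gamma3 m s := PresentedGroup.of i

/-- The elements `bᵢ = aₙ aᵢ` for `i = 1, …, n − 1`. -/
def b3 {m s : ℕ} (i : Fin m) : Gamma3 m s := a3 (Fin.last m) * a3 i.castSucc

open Multiplicative

section Aux

variable {m s : ℕ}

lemma rels3_one {r : FreeGroup (Fin (m+1))} (hr : r ∈ rels3 m s) :
    (PresentedGroup.mk (rels3 m s) r) = 1 :=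
  (QuotientGroup.eq_one_iff r).mpr (Subgroup.subset_normalClosure hr)

lemma a3_sq (i : Fin (m+1)) : (a3 (m := m) (s := s) i) * a3 i = 1 := by
  have h := rels3_one (m := m) (s := s)
    (Set.mem_union_left _ (Set.mem_union_left _ ⟨i, rfl⟩))
  simpa [a3, PresentedGroup.of, map_mul] using h

lemma a3_inv (i : Fin (m+1)) : (a3 (m := m) (s := s) i)⁻¹ = a3 i :=
  inv_eq_of_mul_eq_one_right (a3_sq i)

lemma pair_pow (i j : Fin (m+1)) : ((a3 (m := m) (s := s) i) * a3 j) ^ s = 1 := by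
  have h := rels3_one (m := m) (s := s)
    (Set.mem_union_left _ (Set.mem_union_right _ ⟨(i, j), rfl⟩))
  simpa [a3, PresentedGroup.of, map_mul, map_pow] using h

lemma triple (i j k : Fin (m+1)) :
    (a3 (m := m) (s := s) i) * a3 j * a3 k = a3 k * a3 j * a3 i := by
  have h := rels3_one (m := m) (s := s)
    (Set.mem_union_right _ ⟨(i, j, k), rfl⟩)
  rw [map_mul, map_inv, mul_inv_eq_one] at h
  simpa [a3, PresentedGroup.of, map_mul] using h

lemma b3_pow (i : Fin m) : (b3 (m := m) (s := s) i) ^ s = 1 := pair_pow _ _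

lemma b3_comm (i j : Fin m) :
    (b3 (m := m) (s := s) i) * b3 j = b3 j * b3 i := by
  have h := triple (m := m) (s := s) i.castSucc (Fin.last m) j.castSucc
  simp only [b3, mul_assoc]
  simp only [mul_assoc] at h
  rw [h]

/-- The subgroup generated by the `bᵢ`. -/
def H3 (m s : ℕ) : Subgroup (Gamma3 m s) := Subgroup.closure (Set.range b3)

lemma b3_mem (i : Fin m) : b3 (m := m) (s := s) i ∈ H3 m s :=
  Subgroup.subset_closure ⟨i, rfl⟩

lemma H3_conj : ∀ g ∈ H3 m s,
    a3 (Fin.last m) * g * (a3 (m := m) (s := s) (Fin.last m))⁻¹ ∈ H3 m s := by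
  intro g hg
  induction hg using Subgroup.closure_induction with
  | mem x hx =>
    obtain ⟨i, rfl⟩ := hx
    have key : a3 (Fin.last m) * b3 i * (a3 (m := m) (s := s) (Fin.last m))⁻¹
        = (b3 i)⁻¹ := by
      rw [a3_inv, b3, mul_inv_rev, a3_inv, a3_inv]
      simp only [← mul_assoc]
      rw [a3_sq, one_mul]
    rw [key]
    exact inv_mem (b3_mem i)
  | one => simpa using one_mem (H3 m s)
  | mul x y hx hy ihx ihy =>
    have key : a3 (Fin.last m) * (x * y) * (a3 (m := m) (s := s) (Fin.last m))⁻¹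
        = (a3 (Fin.last m) * x * (a3 (Fin.last m))⁻¹) *
          (a3 (Fin.last m) * y * (a3 (Fin.last m))⁻¹) := by group
    rw [key]; exact mul_mem ihx ihy
  | inv x hx ihx =>
    have key : a3 (Fin.last m) * x⁻¹ * (a3 (m := m) (s := s) (Fin.last m))⁻¹
        = (a3 (Fin.last m) * x * (a3 (Fin.last m))⁻¹)⁻¹ := by group
    rw [key]; exact inv_mem ihx

lemma H3_comm : ∀ x ∈ H3 m s, ∀ y ∈ H3 m s, Commute x y := by
  intro x hx y hy
  induction hx, hy using Subgroup.closure_induction₂ with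
  | mem a b ha hb =>
    obtain ⟨i, rfl⟩ := ha; obtain ⟨j, rfl⟩ := hb
    exact b3_comm i j
  | one_left b hb => exact Commute.one_left _
  | one_right a ha => exact Commute.one_right _
  | mul_left a b c _ _ _ h1 h2 => exact h1.mul_left h2
  | mul_right a b c _ _ _ h1 h2 => exact h1.mul_right h2
  | inv_left a b _ _ h => exact h.inv_left
  | inv_right a b _ _ h => exact h.inv_right

lemma a3_cancel_right (i : Fin (m+1)) (x : Gamma3 m s) : x * a3 i * a3 i = x := by
  rw [mul_assoc, a3_sq, mul_one]

lemma a3_cancel_left (i : Fin (m+1)) (x : Gamma3 m s) : a3 i * (a3 i * x) = x := by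
  rw [← mul_assoc, a3_sq, one_mul]

lemma H3_conj' : ∀ g ∈ H3 m s,
    a3 (Fin.last m) * g * (a3 (m := m) (s := s) (Fin.last m)) ∈ H3 m s := by
  intro g hg
  have h := H3_conj g hg
  rwa [a3_inv] at h

/-- Every element of `Γ` lies in `H` or in `H · aₙ`. -/
lemma mem_H3_or (x : Gamma3 m s) :
    x ∈ H3 m s ∨ x * a3 (Fin.last m) ∈ H3 m s := by
  let K : Subgroup (Gamma3 m s) :=
    { carrier := {x | x ∈ H3 m s ∨ x * a3 (Fin.last m) ∈ H3 m s}
      one_mem' := Or.inl (one_mem _)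
      mul_mem' := by
        rintro x y (hx | hx) (hy | hy)
        · exact Or.inl (mul_mem hx hy)
        · refine Or.inr ?_
          have e1 : x * y * a3 (Fin.last m) = x * (y * a3 (Fin.last m)) := by group
          rw [e1]; exact mul_mem hx hy
        · refine Or.inr ?_
          have h2 := H3_conj' _ hy
          have e1 : (x * a3 (Fin.last m)) * (a3 (Fin.last m) * y * a3 (Fin.last m))
              = x * y * a3 (Fin.last m) := by
            calc (x * a3 (Fin.last m)) * (a3 (Fin.last m) * y * a3 (Fin.last m))
                = x * (a3 (Fin.last m) * (a3 (Fin.last m) * (y * a3 (Fin.last m)))) := by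
                  group
              _ = x * (y * a3 (Fin.last m)) := by rw [a3_cancel_left]
              _ = x * y * a3 (Fin.last m) := by group
          rw [← e1]; exact mul_mem hx h2
        · refine Or.inl ?_
          have h2 := H3_conj' _ hy
          have e1 : (x * a3 (Fin.last m)) *
                (a3 (Fin.last m) * (y * a3 (Fin.last m)) * a3 (Fin.last m))
              = x * y := by
            calc (x * a3 (Fin.last m)) *
                (a3 (Fin.last m) * (y * a3 (Fin.last m)) * a3 (Fin.last m))
                = x * (a3 (Fin.last m) * (a3 (Fin.last m) *
                    (y * a3 (Fin.last m) * a3 (Fin.last m)))) := by group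
              _ = x * (y * a3 (Fin.last m) * a3 (Fin.last m)) := by rw [a3_cancel_left]
              _ = x * y := by rw [a3_cancel_right]
          rw [← e1]; exact mul_mem hx h2
      inv_mem' := by
        rintro x (hx | hx)
        · exact Or.inl (inv_mem hx)
        · refine Or.inr ?_
          have h3 := H3_conj' _ (inv_mem hx)
          have e1 : a3 (Fin.last m) * (x * a3 (Fin.last m))⁻¹ * a3 (Fin.last m)
              = x⁻¹ * a3 (Fin.last m) := by
            calc a3 (Fin.last m) * (x * a3 (Fin.last m))⁻¹ * a3 (Fin.last m)
                = a3 (Fin.last m) * ((a3 (Fin.last m))⁻¹ * (x⁻¹ * a3 (Fin.last m))) := by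
                  group
              _ = a3 (Fin.last m) * (a3 (Fin.last m) * (x⁻¹ * a3 (Fin.last m))) := by
                  rw [a3_inv]
              _ = x⁻¹ * a3 (Fin.last m) := by rw [a3_cancel_left]
          rwa [e1] at h3 }
  have hK : ∀ g, g ∈ K := by
    intro g
    refine PresentedGroup.generated_by _ K ?_ g
    intro j
    induction j using Fin.lastCases with
    | last =>
      refine Or.inr ?_
      show a3 (Fin.last m) * a3 (Fin.last m) ∈ H3 m s
      rw [a3_sq]; exact one_mem _
    | cast i =>
      refine Or.inr ?_
      show a3 i.castSucc * a3 (Fin.last m) ∈ H3 m s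
      have e1 : a3 (m := m) (s := s) i.castSucc * a3 (Fin.last m) = (b3 i)⁻¹ := by
        rw [b3, mul_inv_rev, a3_inv, a3_inv]
      rw [e1]; exact inv_mem (b3_mem i)
  exact hK x

/-! ### The model group `(ℤ_s)^m ⋊ ℤ₂` -/

/-- The abelian group `(ℤ_s)^m`, written multiplicatively. -/
abbrev NN (m s : ℕ) := Multiplicative (Fin m → ZMod s)

lemma zmod2_cases : ∀ e : ZMod 2, e = 0 ∨ e = 1 := by decide

/-- The action of `ℤ₂` on `(ℤ_s)^m` by inversion. -/
def act3 (m s : ℕ) : Multiplicative (ZMod 2) →* MulAut (NN m s) where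
  toFun e := if e.toAdd = 0 then 1 else MulEquiv.inv (NN m s)
  map_one' := by simp
  map_mul' x y := by
    have hinv : (MulEquiv.inv (NN m s)) * (MulEquiv.inv (NN m s)) = 1 := by
      ext z; simp
    have hx := zmod2_cases x.toAdd
    have hy := zmod2_cases y.toAdd
    have hxy : (x * y).toAdd = x.toAdd + y.toAdd := rfl
    rcases hx with hx | hx <;> rcases hy with hy | hy <;>
      simp only [hxy, hx, hy, zero_add, add_zero,
        show (1 : ZMod 2) + 1 = 0 from by decide,
        if_pos rfl, if_neg (show (1 : ZMod 2) ≠ 0 from by decide),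
        one_mul, mul_one, hinv] <;> simp

/-- The semidirect product model. -/
abbrev GG (m s : ℕ) := NN m s ⋊[act3 m s] Multiplicative (ZMod 2)

/-- Elements of the model group. -/
def el (v : Fin m → ZMod s) (e : ZMod 2) : GG m s := ⟨ofAdd v, ofAdd e⟩

lemma act3_apply (e : ZMod 2) (v : Fin m → ZMod s) :
    (act3 m s (ofAdd e)) (ofAdd v) = ofAdd (if e = 0 then v else -v) := by
  rcases zmod2_cases e with he | he <;>
    simp [act3, he, MulEquiv.inv_apply, show (1 : ZMod 2) ≠ 0 from by decide,
      ← ofAdd_neg]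

lemma el_mul (v w : Fin m → ZMod s) (e d : ZMod 2) :
    el v e * el w d = el (m := m) (s := s) (v + if e = 0 then w else -w) (e + d) := by
  refine SemidirectProduct.ext ?_ ?_
  · show (ofAdd v) * (act3 m s (ofAdd e)) (ofAdd w) = ofAdd (v + _)
    rw [act3_apply, ← ofAdd_add]
  · show ofAdd e * ofAdd d = ofAdd (e + d)
    rw [← ofAdd_add]

lemma el_zero : el (m := m) (s := s) 0 0 = 1 := rfl

lemma el_pow (v : Fin m → ZMod s) (k : ℕ) :
    (el (m := m) (s := s) v 0) ^ k = el (k • v) 0 := by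
  induction k with
  | zero => simp [el_zero]
  | succ n ih =>
    rw [pow_succ, ih, el_mul, if_pos rfl, add_zero, succ_nsmul]

/-- The vector assigned to the generator `aᵢ`. -/
def dv (m s : ℕ) (i : Fin (m + 1)) : Fin m → ZMod s :=
  if h : (i : ℕ) < m then -Pi.single ⟨i, h⟩ 1 else 0

/-- The image of the generator `aᵢ` in the model group. -/
def fg (m s : ℕ) (i : Fin (m + 1)) : GG m s := el (dv m s i) 1

lemma smul_s_eq_zero (x : Fin m → ZMod s) : s • x = 0 := by
  funext j
  rw [Pi.smul_apply, Pi.zero_apply, nsmul_eq_mul, ZMod.natCast_self, zero_mul]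

lemma fg_rels : ∀ r ∈ rels3 m s, FreeGroup.lift (fg m s) r = 1 := by
  have h10 : (1 : ZMod 2) ≠ 0 := by decide
  have h11 : (1 : ZMod 2) + 1 = 0 := by decide
  rintro r ((⟨i, rfl⟩ | ⟨p, rfl⟩) | ⟨t, rfl⟩)
  · rw [map_mul, FreeGroup.lift_apply_of, fg, el_mul, if_neg h10, h11, add_neg_cancel, el_zero]
  · rw [map_pow, map_mul, FreeGroup.lift_apply_of, FreeGroup.lift_apply_of, fg, fg,
      el_mul, if_neg h10, h11, el_pow, smul_s_eq_zero, el_zero]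
  · rw [map_mul, map_inv, mul_inv_eq_one]
    simp only [map_mul, FreeGroup.lift_apply_of, fg, el_mul, if_neg h10, if_pos rfl, if_true, h11, zero_add]
    congr 1
    abel

/-- The canonical homomorphism from `Γ` to the model group. -/
def phi3 (m s : ℕ) : Gamma3 m s →* GG m s := PresentedGroup.toGroup fg_rels

lemma phi3_a (i : Fin (m + 1)) : phi3 m s (a3 i) = fg m s i :=
  PresentedGroup.toGroup.of fg_rels

lemma dv_last : dv m s (Fin.last m) = 0 := by
  rw [dv, dif_neg]; simp

lemma dv_castSucc (i : Fin m) : dv m s i.castSucc = -Pi.single i 1 := by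
  rw [dv, dif_pos (by simp)]
  congr 1

lemma phi3_b (i : Fin m) : phi3 m s (b3 i) = el (Pi.single i 1) 0 := by
  have h10 : (1 : ZMod 2) ≠ 0 := by decide
  have h11 : (1 : ZMod 2) + 1 = 0 := by decide
  rw [b3, map_mul, phi3_a, phi3_a, fg, fg, el_mul, if_neg h10, h11,
    dv_last, dv_castSucc, neg_neg, zero_add]

lemma right_el (v : Fin m → ZMod s) (e : ZMod 2) :
    SemidirectProduct.rightHom (el (m := m) (s := s) v e) = ofAdd e := rfl

end Aux

theorem stmt3 (m s : ℕ) (hm : 1 ≤ m) (hs : 1 ≤ s)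
    (π : Gamma3 m s →* Multiplicative (ZMod 2))
    (hπ : ∀ i, π (a3 i) = Multiplicative.ofAdd 1) :
    (∀ x ∈ π.ker, ∀ y ∈ π.ker, x * y = y * x) ∧
    π.ker = Subgroup.closure (Set.range (b3 (m := m) (s := s))) ∧
    (∀ i : Fin m, (b3 (m := m) (s := s) i) ^ s = 1) ∧
    ∃ e : ↥π.ker ≃* Multiplicative (Fin m → ZMod s),
      ∀ (i : Fin m) (h : b3 (m := m) (s := s) i ∈ π.ker),
        e ⟨b3 i, h⟩ = Multiplicative.ofAdd (Pi.single i 1) := by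
  haveI : NeZero s := ⟨by omega⟩
  -- `π` agrees with the right projection of `phi3`
  have hπeq : π = SemidirectProduct.rightHom.comp (phi3 m s) := by
    ext i
    rw [MonoidHom.comp_apply]
    show π (a3 i) = SemidirectProduct.rightHom (phi3 m s (a3 i))
    rw [hπ, phi3_a, fg, right_el]
  have hright : ∀ x : Gamma3 m s, π x = ofAdd (phi3 m s x).right.toAdd := by
    intro x; rw [hπeq]; rfl
  -- membership of the `bᵢ` in the kernel
  have hbker : ∀ i : Fin m, b3 (m := m) (s := s) i ∈ π.ker := by
    intro i
    rw [MonoidHom.mem_ker, b3, map_mul, hπ, hπ, ← ofAdd_add,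
      show (1 : ZMod 2) + 1 = 0 from by decide, ofAdd_zero]
  have hHle : H3 m s ≤ π.ker := by
    rw [H3, Subgroup.closure_le]
    rintro x ⟨i, rfl⟩
    exact hbker i
  have hkerH : π.ker = H3 m s := by
    refine le_antisymm ?_ hHle
    intro x hx
    rcases mem_H3_or x with h | h
    · exact h
    · exfalso
      have h1 : π (x * a3 (Fin.last m)) = 1 := hHle h
      rw [map_mul, MonoidHom.mem_ker.mp hx, one_mul, hπ] at h1
      exact absurd h1 (by decide)
  refine ⟨?_, hkerH, b3_pow, ?_⟩
  · intro x hx y hy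
    exact (H3_comm x (hkerH ▸ hx) y (hkerH ▸ hy)).eq
  -- the isomorphism
  letI : CommGroup ↥π.ker :=
    { (inferInstance : Group ↥π.ker) with
      mul_comm := fun a b =>
        Subtype.ext ((H3_comm _ (hkerH ▸ a.2) _ (hkerH ▸ b.2)).eq) }
  set B : Fin m → ↥π.ker := fun i => ⟨b3 i, hbker i⟩ with hBdef
  have hB : ∀ i, B i ^ s = 1 := by
    intro i
    ext
    push_cast
    exact b3_pow i
  have powkey : ∀ (i : Fin m) (x y : ZMod s),
      B i ^ (x + y).val = B i ^ x.val * B i ^ y.val := by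
    intro i x y
    rw [ZMod.val_add, ← pow_add, ← pow_eq_pow_mod _ (hB i)]
  have hrk : ∀ x : Gamma3 m s, x ∈ π.ker → (phi3 m s x).right = 1 := by
    intro x hx
    have := MonoidHom.mem_ker.mp hx
    rw [hright] at this
    simpa using this
  set ψ : Multiplicative (Fin m → ZMod s) →* ↥π.ker :=
    { toFun := fun v => ∏ i, B i ^ (v.toAdd i).val
      map_one' := by simp
      map_mul' := fun v w => by
        show (∏ i, B i ^ (((v * w).toAdd) i).val)
            = (∏ i, B i ^ (v.toAdd i).val) * ∏ i, B i ^ (w.toAdd i).val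
        rw [← Finset.prod_mul_distrib]
        exact Finset.prod_congr rfl fun i _ => powkey i (v.toAdd i) (w.toAdd i) } with hψdef
  set φ' : ↥π.ker →* Multiplicative (Fin m → ZMod s) :=
    { toFun := fun x => (phi3 m s x.1).left
      map_one' := by
        show (phi3 m s ((1 : ↥π.ker) : Gamma3 m s)).left = 1
        rw [OneMemClass.coe_one, map_one, SemidirectProduct.one_left]
      map_mul' := fun x y => by
        show (phi3 m s (x.1 * y.1)).left = _
        rw [map_mul, SemidirectProduct.mul_left, hrk x.1 x.2, map_one,
          MulAut.one_apply] } with hφ'def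
  have φ'B : ∀ i, φ' (B i) = ofAdd (Pi.single i 1) := by
    intro i
    show (phi3 m s (b3 i)).left = _
    rw [phi3_b]
    rfl
  have hval1 : (1 : ZMod s).val = 1 % s := by
    rw [show (1 : ZMod s) = ((1 : ℕ) : ZMod s) by norm_num, ZMod.val_natCast]
  have hψsingle : ∀ i : Fin m, ψ (ofAdd (Pi.single i 1)) = B i := by
    intro i
    rw [show ψ (ofAdd (Pi.single i 1)) = ∏ j, B j ^ (((Pi.single i 1 : Fin m → ZMod s)) j).val
      from rfl]
    rw [Fintype.prod_eq_single i (fun j hj => by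
      rw [Pi.single_eq_of_ne hj, ZMod.val_zero, pow_zero])]
    rw [Pi.single_eq_same, hval1, ← pow_eq_pow_mod 1 (hB i), pow_one]
  have left_inv : ∀ x : ↥π.ker, ψ (φ' x) = x := by
    rintro ⟨g, hg⟩
    have hgH : g ∈ H3 m s := hkerH ▸ hg
    revert hg
    induction hgH using Subgroup.closure_induction with
    | mem x hx =>
      obtain ⟨i, rfl⟩ := hx
      intro hk
      have : φ' ⟨b3 i, hk⟩ = ofAdd (Pi.single i 1) := φ'B i
      rw [this, hψsingle i]
    | one =>
      intro hk
      have h1 : (⟨1, hk⟩ : ↥π.ker) = 1 := rfl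
      rw [h1, map_one, map_one]
    | mul x y hxH hyH ihx ihy =>
      intro hk
      have hxk : x ∈ π.ker := hHle hxH
      have hyk : y ∈ π.ker := hHle hyH
      have h1 : (⟨x * y, hk⟩ : ↥π.ker) = ⟨x, hxk⟩ * ⟨y, hyk⟩ := rfl
      rw [h1, map_mul, map_mul, ihx hxk, ihy hyk]
    | inv x hxH ihx =>
      intro hk
      have hxk : x ∈ π.ker := hHle hxH
      have h1 : (⟨x⁻¹, hk⟩ : ↥π.ker) = (⟨x, hxk⟩ : ↥π.ker)⁻¹ := rfl
      rw [h1, map_inv, map_inv, ihx hxk]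
  have right_inv : ∀ v : Multiplicative (Fin m → ZMod s), φ' (ψ v) = v := by
    intro v
    show φ' (∏ i, B i ^ (v.toAdd i).val) = v
    rw [map_prod]
    have : ∀ i : Fin m, φ' (B i ^ (v.toAdd i).val)
        = ofAdd ((v.toAdd i).val • Pi.single i 1) := by
      intro i
      rw [map_pow, φ'B i, ofAdd_nsmul]
    rw [Finset.prod_congr rfl fun i _ => this i, ← ofAdd_sum]
    congr 1
    have : ∀ i : Fin m, (v.toAdd i).val • Pi.single i (1 : ZMod s)
        = (Pi.single i (v.toAdd i) : Fin m → ZMod s) := by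
      intro i
      rw [← Pi.single_smul, nsmul_eq_mul, mul_one, ZMod.natCast_val, ZMod.cast_id]
    rw [Finset.sum_congr rfl fun i _ => this i, Finset.univ_sum_single, ofAdd_toAdd]
  refine ⟨{ toFun := φ', invFun := ψ, left_inv := left_inv, right_inv := right_inv,
            map_mul' := φ'.map_mul }, ?_⟩
  intro i h
  show φ' ⟨b3 i, h⟩ = ofAdd (Pi.single i 1)
  exact φ'B i
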